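/- Let η : ℝ → ℝ³ and η_m : ℝ → ℝ³ (m ∈ ℕ) be continuous 1-periodic maps such that η_m → η uniformly, η is injective on [0, 1), and there exist constants c, C > 0 and δ ∈ (0, 1/2] such that c · d₁(u, v) ≤ ‖η_m(u) − η_m(v)‖ ≤ C · d₁(u, v) for all m and all u, v with d₁(u, v) ≤ δ. Then the kernels L_m(u, v) = log ‖η_m(u) − η_m(v)‖ are uniformly integrable on [0, 1]²: each L_m is Lebesgue-integrable on [0,1]², and for every ε > 0 there exists δ' > 0 such that for every m and every measurable set A ⊆ [0, 1]² of Lebesgue measure at most δ', one has ∫_A |L_m(u, v)| du dv ≤ ε. -/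

import Mathlib

open MeasureTheory Filter Topology

/-- Circular distance on the parameter circle of circumference `L`:
`d_L(s, t) = min_{k ∈ ℤ} |s - t + k L|`. -/
noncomputable def circDist (L s t : ℝ) : ℝ := ⨅ k : ℤ, |s - t + k * L|

section Aux

lemma circDist_le_abs (s t : ℝ) : circDist 1 s t ≤ |s - t| := by
  have h : |s - t| = |s - t + (0 : ℤ) * 1| := by norm_num
  rw [circDist, h]
  exact ciInf_le ⟨0, by rintro x ⟨k, rfl⟩; exact abs_nonneg _⟩ 0

lemma circDist_eq_abs {s t : ℝ} (h : |s - t| ≤ 1 / 2) : circDist 1 s t = |s - t| := by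
  refine le_antisymm (circDist_le_abs s t) (le_ciInf fun k => ?_)
  rcases eq_or_ne k 0 with rfl | hk
  · simp
  · have h1 : (1 : ℝ) ≤ |(k : ℝ)| := by
      rw [← Int.cast_abs]
      exact_mod_cast Int.one_le_abs hk
    have h2 : |(k : ℝ)| ≤ |s - t + k * 1| + |s - t| := by
      have h3 := abs_add_le (s - t + k * 1) (-(s - t))
      have h4 : s - t + k * 1 + -(s - t) = (k : ℝ) := by ring
      rw [h4, abs_neg] at h3
      exact h3
    linarith

/-- Chord-arc upper bound extends to all pairs by chaining. -/
lemma chain_upper {f : ℝ → EuclideanSpace ℝ (Fin 3)} {C δ : ℝ} (hC : 0 < C) (hδ0 : 0 < δ)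
    (hca : ∀ u v : ℝ, circDist 1 u v ≤ δ → ‖f u - f v‖ ≤ C * circDist 1 u v) :
    ∀ u v : ℝ, |u - v| ≤ 1 → ‖f u - f v‖ ≤ C := by
  intro u v huv
  set n : ℕ := ⌈1 / δ⌉₊ with hn
  have hn0 : 0 < n := Nat.ceil_pos.2 (by positivity)
  have hn0' : (0 : ℝ) < n := by exact_mod_cast hn0
  have hnδ : 1 / (n : ℝ) ≤ δ := by
    rw [div_le_iff₀ hn0']
    have h1 : 1 / δ ≤ (n : ℝ) := Nat.le_ceil _
    rw [div_le_iff₀ hδ0] at h1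
    linarith
  set s : ℝ := (v - u) / n with hs
  set g : ℕ → EuclideanSpace ℝ (Fin 3) := fun i => f (u + i * s) with hg
  have hg0 : g 0 = f u := by simp [hg]
  have hgn : g n = f v := by
    simp only [hg, hs]
    rw [mul_div_cancel₀ _ hn0'.ne']
    ring_nf
  have hstep : ∀ i ∈ Finset.range n, dist (g i) (g (i + 1)) ≤ C / n := by
    intro i _
    have habs : |(u + i * s) - (u + ((i + 1 : ℕ) : ℝ) * s)| = |s| := by
      have h : (u + i * s) - (u + ((i + 1 : ℕ) : ℝ) * s) = -s := by push_cast; ring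
      rw [h, abs_neg]
    have hs1 : |s| ≤ 1 / n := by
      rw [hs, abs_div, abs_of_pos hn0']
      have habs2 : |v - u| ≤ 1 := by rwa [abs_sub_comm]
      gcongr
    have hcd : circDist 1 (u + i * s) (u + ((i + 1 : ℕ) : ℝ) * s) ≤ |s| := by
      have := circDist_le_abs (u + i * s) (u + ((i + 1 : ℕ) : ℝ) * s)
      rwa [habs] at this
    have hδ' : circDist 1 (u + i * s) (u + ((i + 1 : ℕ) : ℝ) * s) ≤ δ :=
      hcd.trans (hs1.trans hnδ)
    have hup := hca _ _ hδ'
    rw [dist_eq_norm]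
    calc ‖f (u + i * s) - f (u + ((i + 1 : ℕ) : ℝ) * s)‖
        ≤ C * circDist 1 (u + i * s) (u + ((i + 1 : ℕ) : ℝ) * s) := hup
      _ ≤ C * (1 / n) := mul_le_mul_of_nonneg_left (hcd.trans hs1) hC.le
      _ = C / n := by ring
  calc ‖f u - f v‖ = dist (g 0) (g n) := by rw [hg0, hgn, dist_eq_norm]
    _ ≤ ∑ i ∈ Finset.range n, dist (g i) (g (i + 1)) := dist_le_range_sum_dist g n
    _ ≤ ∑ _i ∈ Finset.range n, C / n := Finset.sum_le_sum hstep
    _ = n * (C / n) := by rw [Finset.sum_const, Finset.card_range, nsmul_eq_mul]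
    _ = C := by field_simp

/-- On a short window, the distance to a fixed point is bounded below by a multiple of the
distance to the argmin. -/
lemma window_lower {f : ℝ → EuclideanSpace ℝ (Fin 3)} {c δ : ℝ} (hc : 0 < c)
    (hf : Continuous f)
    (hlow : ∀ u w : ℝ, |u - w| ≤ δ → c * |u - w| ≤ ‖f u - f w‖)
    (v α ℓ : ℝ) (hℓ0 : 0 ≤ ℓ) (hℓδ : ℓ ≤ δ) :
    ∃ w ∈ Set.Icc α (α + ℓ), ∀ u ∈ Set.Icc α (α + ℓ),
      c / 2 * |u - w| ≤ ‖f u - f v‖ := by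
  have hne : (Set.Icc α (α + ℓ)).Nonempty := ⟨α, le_rfl, by linarith⟩
  obtain ⟨w, hw, hmin⟩ := isCompact_Icc.exists_isMinOn hne
    ((hf.sub continuous_const).norm.continuousOn (s := Set.Icc α (α + ℓ)))
  refine ⟨w, hw, fun u hu => ?_⟩
  have habs : |u - w| ≤ δ := by
    rw [abs_sub_le_iff]
    exact ⟨by linarith [hu.2, hw.1], by linarith [hu.1, hw.2]⟩
  have h1 : c * |u - w| ≤ ‖f u - f w‖ := hlow u w habs
  have h2 : ‖f w - f v‖ ≤ ‖f u - f v‖ := hmin hu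
  have h3 : ‖f u - f w‖ ≤ ‖f u - f v‖ + ‖f w - f v‖ := by
    have : f u - f w = (f u - f v) - (f w - f v) := by abel
    rw [this]
    exact norm_sub_le _ _
  linarith

lemma log_sq_le {a x B : ℝ} (ha : 0 < a) (hax : a ≤ x) (hxB : x ≤ B) (hB : 1 ≤ B) :
    (Real.log x) ^ 2 ≤ 32 * a ^ (-(2 : ℝ)⁻¹) + 2 * (Real.log B) ^ 2 := by
  have hx : 0 < x := ha.trans_le hax
  have hrpow4 : (0 : ℝ) ≤ a ^ (-(4 : ℝ)⁻¹) := Real.rpow_nonneg ha.le _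
  have hlogB : 0 ≤ Real.log B := Real.log_nonneg hB
  have hloga : -Real.log a ≤ 4 * a ^ (-(4 : ℝ)⁻¹) := by
    have hpos : (0 : ℝ) < a⁻¹ ^ ((4 : ℝ)⁻¹) := Real.rpow_pos_of_pos (inv_pos.2 ha) _
    have h1 : Real.log (a⁻¹ ^ ((4 : ℝ)⁻¹)) ≤ a⁻¹ ^ ((4 : ℝ)⁻¹) := by
      have := Real.log_le_sub_one_of_pos hpos
      linarith
    rw [Real.log_rpow (inv_pos.2 ha), Real.log_inv] at h1
    have h2 : a⁻¹ ^ ((4 : ℝ)⁻¹) = a ^ (-(4 : ℝ)⁻¹) := by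
      rw [Real.rpow_neg ha.le, ← Real.inv_rpow ha.le]
    rw [h2] at h1
    linarith
  have habs : |Real.log x| ≤ 4 * a ^ (-(4 : ℝ)⁻¹) + Real.log B := by
    rw [abs_le]
    constructor
    · have h1 : Real.log a ≤ Real.log x := Real.log_le_log ha hax
      linarith
    · have h1 : Real.log x ≤ Real.log B := Real.log_le_log hx hxB
      linarith
  have hsq : (a ^ (-(4 : ℝ)⁻¹)) ^ 2 = a ^ (-(2 : ℝ)⁻¹) := by
    rw [← Real.rpow_natCast (a ^ (-(4 : ℝ)⁻¹)) 2, ← Real.rpow_mul ha.le]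
    norm_num
  have h1 : (Real.log x) ^ 2 ≤ (4 * a ^ (-(4 : ℝ)⁻¹) + Real.log B) ^ 2 := by
    have := sq_abs (Real.log x)
    nlinarith [abs_nonneg (Real.log x)]
  nlinarith [sq_nonneg (4 * a ^ (-(4 : ℝ)⁻¹) - Real.log B)]

lemma meas_rpow_abs (w r : ℝ) (hr : r ≠ 0) :
    Measurable fun u : ℝ => |u - w| ^ r := by
  have h : (fun u : ℝ => |u - w| ^ r)
      = fun u => if u = w then 0 else Real.exp (Real.log |u - w| * r) := by
    funext u
    by_cases h : u = w
    · simp [h, Real.zero_rpow hr]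
    · rw [if_neg h, Real.rpow_def_of_pos (abs_pos.2 (sub_ne_zero.2 h))]
  rw [h]
  refine Measurable.ite (MeasurableSet.singleton w) measurable_const ?_
  exact Real.measurable_exp.comp
    ((Real.measurable_log.comp ((measurable_id.sub_const w).abs)).mul_const r)

lemma lint_rpow (u0 T : ℝ) (hT0 : 0 < T) (hT1 : T ≤ 1) :
    ∫⁻ u in Set.Icc (u0 - T) (u0 + T), ENNReal.ofReal (|u - u0| ^ (-(2 : ℝ)⁻¹))
      ≤ ENNReal.ofReal 4 := by
  have hr : (-1 : ℝ) < -(2 : ℝ)⁻¹ := by norm_num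
  have hsub : Set.Icc (u0 - T) (u0 + T) ⊆ Set.Icc (u0 - T) u0 ∪ Set.Icc u0 (u0 + T) := by
    intro u hu
    rcases le_total u u0 with h | h
    · exact Or.inl ⟨hu.1, h⟩
    · exact Or.inr ⟨h, hu.2⟩
  have key : ∀ (g : ℝ → ℝ) (s : Set ℝ), MeasurableSet s →
      IntegrableOn g s → (∀ u ∈ s, 0 ≤ g u) → (∀ u ∈ s, |u - u0| ^ (-(2 : ℝ)⁻¹) = g u) →
      (∫ u in s, g u) ≤ 2 →
      ∫⁻ u in s, ENNReal.ofReal (|u - u0| ^ (-(2 : ℝ)⁻¹)) ≤ ENNReal.ofReal 2 := by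
    intro g s hs hint hnn heq hval
    have h1 : ∫⁻ u in s, ENNReal.ofReal (|u - u0| ^ (-(2 : ℝ)⁻¹))
        = ∫⁻ u in s, ENNReal.ofReal (g u) := by
      refine setLIntegral_congr_fun hs (fun u hu => ?_)
      rw [heq u hu]
    rw [h1, ← ofReal_integral_eq_lintegral_ofReal hint
      ((ae_restrict_iff' hs).2 (ae_of_all _ hnn))]
    exact ENNReal.ofReal_le_ofReal hval
  -- right piece
  have hright : ∫⁻ u in Set.Icc u0 (u0 + T), ENNReal.ofReal (|u - u0| ^ (-(2 : ℝ)⁻¹))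
      ≤ ENNReal.ofReal 2 := by
    have hii : IntervalIntegrable (fun x : ℝ => (x - u0) ^ (-(2 : ℝ)⁻¹)) volume u0 (u0 + T) := by
      have h := (intervalIntegral.intervalIntegrable_rpow' hr (a := 0) (b := T)).comp_sub_right u0
      simp only [zero_add] at h
      rwa [add_comm T u0] at h
    have hle : u0 ≤ u0 + T := by linarith
    have hint : IntegrableOn (fun x : ℝ => (x - u0) ^ (-(2 : ℝ)⁻¹)) (Set.Icc u0 (u0 + T)) := by
      rw [integrableOn_Icc_iff_integrableOn_Ioc]
      exact (intervalIntegrable_iff_integrableOn_Ioc_of_le hle).1 hii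
    have hval : (∫ u in Set.Icc u0 (u0 + T), (u - u0) ^ (-(2 : ℝ)⁻¹)) ≤ 2 := by
      rw [MeasureTheory.integral_Icc_eq_integral_Ioc,
        ← intervalIntegral.integral_of_le hle]
      have h2 : (∫ x in u0..u0 + T, (x - u0) ^ (-(2 : ℝ)⁻¹)) = ∫ x in (0:ℝ)..T, x ^ (-(2 : ℝ)⁻¹) := by
        have := intervalIntegral.integral_comp_sub_right (a := u0) (b := u0 + T)
          (fun x : ℝ => x ^ (-(2 : ℝ)⁻¹)) u0
        simpa using this
      rw [h2, integral_rpow (Or.inl hr)]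
      have h0 : (0 : ℝ) ^ (-(2 : ℝ)⁻¹ + 1) = 0 := by
        rw [Real.zero_rpow]; norm_num
      have h4 : T ^ (-(2 : ℝ)⁻¹ + 1) ≤ 1 := Real.rpow_le_one hT0.le hT1 (by norm_num)
      rw [h0, sub_zero, div_le_iff₀ (by norm_num : (0:ℝ) < -(2 : ℝ)⁻¹ + 1)]
      linarith
    exact key _ _ measurableSet_Icc hint
      (fun u hu => Real.rpow_nonneg (sub_nonneg.2 hu.1) _)
      (fun u hu => by rw [abs_of_nonneg (sub_nonneg.2 hu.1)]) hval
  -- left piece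
  have hleft : ∫⁻ u in Set.Icc (u0 - T) u0, ENNReal.ofReal (|u - u0| ^ (-(2 : ℝ)⁻¹))
      ≤ ENNReal.ofReal 2 := by
    have hii : IntervalIntegrable (fun x : ℝ => (u0 - x) ^ (-(2 : ℝ)⁻¹)) volume (u0 - T) u0 := by
      have h := (intervalIntegral.intervalIntegrable_rpow' hr (a := 0) (b := T)).comp_sub_left u0
      simp only [sub_zero] at h
      exact h.symm
    have hle : u0 - T ≤ u0 := by linarith
    have hint : IntegrableOn (fun x : ℝ => (u0 - x) ^ (-(2 : ℝ)⁻¹)) (Set.Icc (u0 - T) u0) := by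
      rw [integrableOn_Icc_iff_integrableOn_Ioc]
      exact (intervalIntegrable_iff_integrableOn_Ioc_of_le hle).1 hii
    have hval : (∫ u in Set.Icc (u0 - T) u0, (u0 - u) ^ (-(2 : ℝ)⁻¹)) ≤ 2 := by
      rw [MeasureTheory.integral_Icc_eq_integral_Ioc,
        ← intervalIntegral.integral_of_le hle]
      have h2 : (∫ x in (u0 - T)..u0, (u0 - x) ^ (-(2 : ℝ)⁻¹))
          = ∫ x in (0:ℝ)..T, x ^ (-(2 : ℝ)⁻¹) := by
        have h := intervalIntegral.integral_comp_sub_left (a := u0 - T) (b := u0)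
          (fun x : ℝ => x ^ (-(2 : ℝ)⁻¹)) u0
        simpa using h
      rw [h2, integral_rpow (Or.inl hr)]
      have h0 : (0 : ℝ) ^ (-(2 : ℝ)⁻¹ + 1) = 0 := by
        rw [Real.zero_rpow]; norm_num
      have h4 : T ^ (-(2 : ℝ)⁻¹ + 1) ≤ 1 := Real.rpow_le_one hT0.le hT1 (by norm_num)
      rw [h0, sub_zero, div_le_iff₀ (by norm_num : (0:ℝ) < -(2 : ℝ)⁻¹ + 1)]
      linarith
    exact key _ _ measurableSet_Icc hint
      (fun u hu => Real.rpow_nonneg (by linarith [hu.2]) _)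
      (fun u hu => by rw [abs_of_nonpos (by linarith [hu.2] : u - u0 ≤ 0), neg_sub]) hval
  calc ∫⁻ u in Set.Icc (u0 - T) (u0 + T), ENNReal.ofReal (|u - u0| ^ (-(2 : ℝ)⁻¹))
      ≤ ∫⁻ u in Set.Icc (u0 - T) u0 ∪ Set.Icc u0 (u0 + T),
          ENNReal.ofReal (|u - u0| ^ (-(2 : ℝ)⁻¹)) := lintegral_mono_set hsub
    _ ≤ (∫⁻ u in Set.Icc (u0 - T) u0, ENNReal.ofReal (|u - u0| ^ (-(2 : ℝ)⁻¹)))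
        + ∫⁻ u in Set.Icc u0 (u0 + T), ENNReal.ofReal (|u - u0| ^ (-(2 : ℝ)⁻¹)) :=
        lintegral_union_le _ _ _
    _ ≤ ENNReal.ofReal 2 + ENNReal.ofReal 2 := add_le_add hleft hright
    _ = ENNReal.ofReal 4 := by rw [← ENNReal.ofReal_add] <;> norm_num


noncomputable def Kconst (c C δ : ℝ) : ℝ :=
  (⌈1 / δ⌉₊ : ℝ) * (128 * (c / 2) ^ (-(2 : ℝ)⁻¹) + 2 * (Real.log (max C 1)) ^ 2)

lemma Kconst_nonneg {c C δ : ℝ} (hc : 0 < c) : 0 ≤ Kconst c C δ := by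
  have h1 : (0:ℝ) ≤ (c / 2) ^ (-(2 : ℝ)⁻¹) := Real.rpow_nonneg (by linarith) _
  have h2 : (0:ℝ) ≤ (⌈1 / δ⌉₊ : ℝ) := Nat.cast_nonneg _
  have h3 : (0:ℝ) ≤ (Real.log (max C 1)) ^ 2 := sq_nonneg _
  apply mul_nonneg h2
  nlinarith

lemma cover_Icc {N : ℕ} (hN : 1 ≤ N) :
    Set.Icc (0:ℝ) 1 ⊆ ⋃ j : Fin N, Set.Icc (((j:ℕ) : ℝ) / N) (((j:ℕ) : ℝ) / N + 1 / N) := by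
  intro u hu
  have hN0 : (0:ℝ) < N := by exact_mod_cast hN
  by_cases h1 : u = 1
  · subst h1
    refine Set.mem_iUnion.2 ⟨⟨N - 1, by omega⟩, ?_, ?_⟩
    · have hcast : (((N - 1 : ℕ)) : ℝ) = (N : ℝ) - 1 := by
        push_cast [Nat.cast_sub hN]
        ring
      simp only [Fin.val_mk]
      rw [hcast, div_le_one hN0]
      linarith
    · have hcast : (((N - 1 : ℕ)) : ℝ) = (N : ℝ) - 1 := by
        push_cast [Nat.cast_sub hN]
        ring
      simp only [Fin.val_mk]
      rw [hcast, ← add_div]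
      rw [le_div_iff₀ hN0]
      linarith
  · have hlt : u < 1 := lt_of_le_of_ne hu.2 h1
    have hu0 : 0 ≤ u := hu.1
    set j : ℕ := ⌊u * N⌋₊ with hj
    have hjlt : j < N := by
      rw [hj]
      rw [Nat.floor_lt (by positivity)]
      calc u * N < 1 * N := by nlinarith
        _ = N := one_mul _
    refine Set.mem_iUnion.2 ⟨⟨j, hjlt⟩, ?_, ?_⟩
    · simp only [Fin.val_mk]
      rw [div_le_iff₀ hN0]
      exact Nat.floor_le (by positivity)
    · simp only [Fin.val_mk]
      rw [← add_div, le_div_iff₀ hN0]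
      have := Nat.lt_floor_add_one (u * N)
      linarith

lemma slice_bound {f : ℝ → EuclideanSpace ℝ (Fin 3)} {c C δ : ℝ} (hc : 0 < c) (hC : 0 < C)
    (hδ : δ ∈ Set.Ioc (0:ℝ) (1/2)) (hf : Continuous f)
    (hca : ∀ u v : ℝ, circDist 1 u v ≤ δ →
      c * circDist 1 u v ≤ ‖f u - f v‖ ∧ ‖f u - f v‖ ≤ C * circDist 1 u v)
    {v : ℝ} (hv : v ∈ Set.Icc (0:ℝ) 1) :
    ∫⁻ u in Set.Icc (0:ℝ) 1, ENNReal.ofReal ((Real.log ‖f u - f v‖) ^ 2)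
      ≤ ENNReal.ofReal (Kconst c C δ) := by
  obtain ⟨hδ0, hδhalf⟩ := hδ
  set N : ℕ := ⌈1 / δ⌉₊ with hN
  have hN1 : 1 ≤ N := Nat.ceil_pos.2 (by positivity)
  have hN0' : (0:ℝ) < N := by exact_mod_cast hN1
  have hNδ : 1 / (N : ℝ) ≤ δ := by
    rw [div_le_iff₀ hN0']
    have h1 : 1 / δ ≤ (N : ℝ) := Nat.le_ceil _
    rw [div_le_iff₀ hδ0] at h1
    linarith
  set B : ℝ := max C 1 with hB
  have hB1 : (1:ℝ) ≤ B := le_max_right _ _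
  have hup : ∀ u w : ℝ, |u - w| ≤ 1 → ‖f u - f w‖ ≤ B := fun u w h =>
    (chain_upper hC hδ0 (fun u v h' => (hca u v h').2) u w h).trans (le_max_left _ _)
  have hlow : ∀ u w : ℝ, |u - w| ≤ δ → c * |u - w| ≤ ‖f u - f w‖ := by
    intro u w h
    have h2 : circDist 1 u w = |u - w| := circDist_eq_abs (h.trans hδhalf)
    have h3 := (hca u w (by rw [h2]; exact h)).1
    rwa [h2] at h3
  set K₁ : ℝ := 128 * (c / 2) ^ (-(2 : ℝ)⁻¹) + 2 * (Real.log B) ^ 2 with hK₁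
  have hwin : ∀ j : Fin N, ∫⁻ u in Set.Icc (((j:ℕ):ℝ)/N) (((j:ℕ):ℝ)/N + 1/N),
      ENNReal.ofReal ((Real.log ‖f u - f v‖) ^ 2) ≤ ENNReal.ofReal K₁ := by
    intro j
    set α : ℝ := ((j:ℕ):ℝ)/N with hα
    have hα0 : 0 ≤ α := by positivity
    have hα1 : α + 1/N ≤ 1 := by
      rw [hα, ← add_div, div_le_one hN0']
      have hjN : ((j:ℕ):ℝ) + 1 ≤ N := by exact_mod_cast j.2
      linarith
    obtain ⟨w, hwmem, hwkey⟩ := window_lower hc hf hlow v α (1/N) (by positivity) hNδ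
    have hae : ∀ᵐ u ∂(volume.restrict (Set.Icc α (α + 1/N))),
        ENNReal.ofReal ((Real.log ‖f u - f v‖) ^ 2)
          ≤ ENNReal.ofReal (2 * (Real.log B) ^ 2)
            + ENNReal.ofReal (32 * (c/2) ^ (-(2:ℝ)⁻¹))
              * ENNReal.ofReal (|u - w| ^ (-(2:ℝ)⁻¹)) := by
      have hmem := ae_restrict_mem (μ := volume) (measurableSet_Icc : MeasurableSet (Set.Icc α (α + 1/N)))
      have hnew : ∀ᵐ u ∂(volume.restrict (Set.Icc α (α + 1/N))), u ≠ w := by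
        refine (ae_iff).2 ?_
        have hsub : {u : ℝ | ¬ u ≠ w} ⊆ {w} := by
          intro u hu
          simp only [Set.mem_setOf_eq, not_not] at hu
          simp [hu]
        refine measure_mono_null hsub ?_
        rw [Measure.restrict_apply (measurableSet_singleton w)]
        refine le_antisymm ((measure_mono Set.inter_subset_left).trans ?_) zero_le
        simp [Real.volume_singleton]
      filter_upwards [hmem, hnew] with u hu hune
      have habs0 : 0 < |u - w| := abs_pos.2 (sub_ne_zero.2 hune)
      have ha0 : 0 < c/2 * |u - w| := by positivity
      have hax : c/2 * |u - w| ≤ ‖f u - f v‖ := hwkey u hu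
      have hxB : ‖f u - f v‖ ≤ B := by
        apply hup
        rw [abs_sub_le_iff]
        exact ⟨by linarith [hu.2, hv.1], by linarith [hu.1, hv.2]⟩
      have hls := log_sq_le ha0 hax hxB hB1
      have hmul : (c/2 * |u - w|) ^ (-(2:ℝ)⁻¹)
          = (c/2) ^ (-(2:ℝ)⁻¹) * |u - w| ^ (-(2:ℝ)⁻¹) :=
        Real.mul_rpow (by positivity) (abs_nonneg _)
      have hr1 : (0:ℝ) ≤ (c/2) ^ (-(2:ℝ)⁻¹) * |u - w| ^ (-(2:ℝ)⁻¹) := by positivity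
      calc ENNReal.ofReal ((Real.log ‖f u - f v‖) ^ 2)
          ≤ ENNReal.ofReal (2 * (Real.log B) ^ 2
              + 32 * (c/2) ^ (-(2:ℝ)⁻¹) * |u - w| ^ (-(2:ℝ)⁻¹)) := by
            apply ENNReal.ofReal_le_ofReal
            rw [hmul] at hls
            linarith
        _ = ENNReal.ofReal (2 * (Real.log B) ^ 2)
            + ENNReal.ofReal (32 * (c/2) ^ (-(2:ℝ)⁻¹))
              * ENNReal.ofReal (|u - w| ^ (-(2:ℝ)⁻¹)) := by
            rw [ENNReal.ofReal_add (by positivity) (by positivity)]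
            congr 1
            rw [show (32:ℝ) * (c/2) ^ (-(2:ℝ)⁻¹) * |u - w| ^ (-(2:ℝ)⁻¹)
                = (32 * (c/2) ^ (-(2:ℝ)⁻¹)) * |u - w| ^ (-(2:ℝ)⁻¹) from by ring]
            exact ENNReal.ofReal_mul (by positivity)
    have hIsub : Set.Icc α (α + 1/N) ⊆ Set.Icc (w - 1/N) (w + 1/N) := by
      intro u hu
      exact ⟨by linarith [hu.1, hwmem.2], by linarith [hu.2, hwmem.1]⟩
    have hIint : ∫⁻ u in Set.Icc α (α + 1/N), ENNReal.ofReal (|u - w| ^ (-(2:ℝ)⁻¹))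
        ≤ ENNReal.ofReal 4 :=
      (lintegral_mono_set hIsub).trans (lint_rpow w (1/N) (by positivity) (by
        rw [div_le_one hN0']; exact_mod_cast hN1))
    have hvol : volume (Set.Icc α (α + 1/N)) ≤ ENNReal.ofReal 1 := by
      rw [Real.volume_Icc, add_sub_cancel_left]
      apply ENNReal.ofReal_le_ofReal
      rw [div_le_one hN0']
      exact_mod_cast hN1
    calc ∫⁻ u in Set.Icc α (α + 1/N), ENNReal.ofReal ((Real.log ‖f u - f v‖) ^ 2)
        ≤ ∫⁻ u in Set.Icc α (α + 1/N),
            (ENNReal.ofReal (2 * (Real.log B) ^ 2)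
              + ENNReal.ofReal (32 * (c/2) ^ (-(2:ℝ)⁻¹))
                * ENNReal.ofReal (|u - w| ^ (-(2:ℝ)⁻¹))) := lintegral_mono_ae hae
      _ = ENNReal.ofReal (2 * (Real.log B) ^ 2) * volume (Set.Icc α (α + 1/N))
          + ENNReal.ofReal (32 * (c/2) ^ (-(2:ℝ)⁻¹))
            * ∫⁻ u in Set.Icc α (α + 1/N), ENNReal.ofReal (|u - w| ^ (-(2:ℝ)⁻¹)) := by
          rw [lintegral_add_left measurable_const, setLIntegral_const,
            lintegral_const_mul' _ _ ENNReal.ofReal_ne_top]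
      _ ≤ ENNReal.ofReal (2 * (Real.log B) ^ 2) * ENNReal.ofReal 1
          + ENNReal.ofReal (32 * (c/2) ^ (-(2:ℝ)⁻¹)) * ENNReal.ofReal 4 :=
          add_le_add (mul_le_mul_right hvol _) (mul_le_mul_right hIint _)
      _ ≤ ENNReal.ofReal K₁ := by
          rw [← ENNReal.ofReal_mul (by positivity), ← ENNReal.ofReal_mul (by positivity),
            ← ENNReal.ofReal_add (by positivity) (by positivity)]
          apply ENNReal.ofReal_le_ofReal
          rw [hK₁]
          have hrp : (0:ℝ) ≤ (c/2) ^ (-(2:ℝ)⁻¹) := Real.rpow_nonneg (by positivity) _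
          nlinarith
  calc ∫⁻ u in Set.Icc (0:ℝ) 1, ENNReal.ofReal ((Real.log ‖f u - f v‖) ^ 2)
      ≤ ∫⁻ u in (⋃ j : Fin N, Set.Icc (((j:ℕ):ℝ)/N) (((j:ℕ):ℝ)/N + 1/N)),
          ENNReal.ofReal ((Real.log ‖f u - f v‖) ^ 2) := lintegral_mono_set (cover_Icc hN1)
    _ ≤ ∑' j : Fin N, ∫⁻ u in Set.Icc (((j:ℕ):ℝ)/N) (((j:ℕ):ℝ)/N + 1/N),
          ENNReal.ofReal ((Real.log ‖f u - f v‖) ^ 2) := lintegral_iUnion_le _ _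
    _ ≤ ∑' _j : Fin N, ENNReal.ofReal K₁ := ENNReal.tsum_le_tsum fun j => hwin j
    _ = (N : ENNReal) * ENNReal.ofReal K₁ := by
        rw [tsum_fintype]
        simp [Finset.sum_const, Finset.card_univ, nsmul_eq_mul]
    _ = ENNReal.ofReal (Kconst c C δ) := by
        rw [Kconst, ENNReal.ofReal_mul (Nat.cast_nonneg N), ENNReal.ofReal_natCast]

end Aux

theorem uniform_integrability_log_kernels
    (η : ℝ → EuclideanSpace ℝ (Fin 3)) (ηm : ℕ → ℝ → EuclideanSpace ℝ (Fin 3))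
    (hη : Continuous η) (hηm : ∀ m, Continuous (ηm m))
    (hperη : ∀ u, η (u + 1) = η u) (hperηm : ∀ m u, ηm m (u + 1) = ηm m u)
    (hconv : TendstoUniformly ηm η atTop)
    (hinj : Set.InjOn η (Set.Ico 0 1))
    (c C δ : ℝ) (hc : 0 < c) (hC : 0 < C) (hδ : δ ∈ Set.Ioc (0:ℝ) (1/2))
    (hchordarc : ∀ m, ∀ u v : ℝ, circDist 1 u v ≤ δ →
      c * circDist 1 u v ≤ ‖ηm m u - ηm m v‖ ∧
        ‖ηm m u - ηm m v‖ ≤ C * circDist 1 u v) :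
    (∀ m, IntegrableOn (fun q : ℝ × ℝ => Real.log ‖ηm m q.1 - ηm m q.2‖)
        (Set.Icc 0 1 ×ˢ Set.Icc 0 1) volume) ∧
      ∀ ε > (0:ℝ), ∃ δ' > (0:ℝ), ∀ m, ∀ A : Set (ℝ × ℝ),
        MeasurableSet A → A ⊆ Set.Icc 0 1 ×ˢ Set.Icc 0 1 →
        volume A ≤ ENNReal.ofReal δ' →
        ∫ q in A, |Real.log ‖ηm m q.1 - ηm m q.2‖| ≤ ε := by
  have hmeasL : ∀ m, Measurable (fun q : ℝ × ℝ => Real.log ‖ηm m q.1 - ηm m q.2‖) := fun m =>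
    Real.measurable_log.comp
      (((((hηm m).comp continuous_fst).sub ((hηm m).comp continuous_snd)).norm).measurable)
  set Kc : ℝ := Kconst c C δ with hKc
  have hK0 : 0 ≤ Kc := Kconst_nonneg hc
  have key2 : ∀ m, ∫⁻ q in Set.Icc (0:ℝ) 1 ×ˢ Set.Icc (0:ℝ) 1,
      ENNReal.ofReal ((Real.log ‖ηm m q.1 - ηm m q.2‖) ^ 2) ≤ ENNReal.ofReal Kc := by
    intro m
    have hFm : Measurable (fun q : ℝ × ℝ =>
        ENNReal.ofReal ((Real.log ‖ηm m q.1 - ηm m q.2‖) ^ 2)) :=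
      ENNReal.measurable_ofReal.comp ((hmeasL m).pow_const 2)
    rw [Measure.volume_eq_prod, ← Measure.prod_restrict]
    rw [lintegral_prod _ hFm.aemeasurable]
    have hinner : ∀ᵐ u ∂(volume.restrict (Set.Icc (0:ℝ) 1)),
        (∫⁻ v in Set.Icc (0:ℝ) 1, ENNReal.ofReal ((Real.log ‖ηm m u - ηm m v‖) ^ 2))
          ≤ ENNReal.ofReal Kc := by
      filter_upwards [ae_restrict_mem (measurableSet_Icc :
        MeasurableSet (Set.Icc (0:ℝ) 1))] with u hu
      have hrw : (∫⁻ v in Set.Icc (0:ℝ) 1, ENNReal.ofReal ((Real.log ‖ηm m u - ηm m v‖) ^ 2))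
          = ∫⁻ v in Set.Icc (0:ℝ) 1, ENNReal.ofReal ((Real.log ‖ηm m v - ηm m u‖) ^ 2) := by
        apply lintegral_congr
        intro v
        rw [norm_sub_rev]
      rw [hrw]
      exact slice_bound hc hC hδ (hηm m) (hchordarc m) hu
    calc (∫⁻ u in Set.Icc (0:ℝ) 1, ∫⁻ v in Set.Icc (0:ℝ) 1,
          ENNReal.ofReal ((Real.log ‖ηm m u - ηm m v‖) ^ 2))
        ≤ ∫⁻ _u in Set.Icc (0:ℝ) 1, ENNReal.ofReal Kc := lintegral_mono_ae hinner
      _ = ENNReal.ofReal Kc := by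
          rw [setLIntegral_const, Real.volume_Icc, sub_zero, ENNReal.ofReal_one, mul_one]
  constructor
  · intro m
    refine ⟨(hmeasL m).aestronglyMeasurable, ?_⟩
    rw [hasFiniteIntegral_iff_norm]
    have hpt : ∀ q : ℝ × ℝ, ENNReal.ofReal ‖Real.log ‖ηm m q.1 - ηm m q.2‖‖
        ≤ 1 + ENNReal.ofReal ((Real.log ‖ηm m q.1 - ηm m q.2‖) ^ 2) := by
      intro q
      set t : ℝ := Real.log ‖ηm m q.1 - ηm m q.2‖
      calc ENNReal.ofReal ‖t‖ ≤ ENNReal.ofReal (1 + t ^ 2) := by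
            apply ENNReal.ofReal_le_ofReal
            rw [Real.norm_eq_abs]
            nlinarith [sq_abs t, sq_nonneg (|t| - 1), abs_nonneg t]
        _ = 1 + ENNReal.ofReal (t ^ 2) := by
            rw [ENNReal.ofReal_add (by norm_num) (sq_nonneg t), ENNReal.ofReal_one]
    have hsqvol : volume (Set.Icc (0:ℝ) 1 ×ˢ Set.Icc (0:ℝ) 1) = 1 := by
      rw [Measure.volume_eq_prod, Measure.prod_prod, Real.volume_Icc, sub_zero,
        ENNReal.ofReal_one, mul_one]
    calc ∫⁻ q in Set.Icc (0:ℝ) 1 ×ˢ Set.Icc (0:ℝ) 1,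
          ENNReal.ofReal ‖Real.log ‖ηm m q.1 - ηm m q.2‖‖
        ≤ ∫⁻ q in Set.Icc (0:ℝ) 1 ×ˢ Set.Icc (0:ℝ) 1,
            (1 + ENNReal.ofReal ((Real.log ‖ηm m q.1 - ηm m q.2‖) ^ 2)) :=
          lintegral_mono fun q => hpt q
      _ = 1 * volume (Set.Icc (0:ℝ) 1 ×ˢ Set.Icc (0:ℝ) 1)
          + ∫⁻ q in Set.Icc (0:ℝ) 1 ×ˢ Set.Icc (0:ℝ) 1,
              ENNReal.ofReal ((Real.log ‖ηm m q.1 - ηm m q.2‖) ^ 2) := by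
          rw [lintegral_add_left measurable_const, setLIntegral_const]
      _ ≤ 1 * 1 + ENNReal.ofReal Kc := by
          rw [hsqvol]
          exact add_le_add le_rfl (key2 m)
      _ < ⊤ := by
          rw [one_mul]
          exact ENNReal.add_lt_top.2 ⟨ENNReal.one_lt_top, ENNReal.ofReal_lt_top⟩
  · intro ε hε
    set T : ℝ := 2 * (Kc + 1) / ε with hT
    have hT0 : 0 < T := by positivity
    refine ⟨ε ^ 2 / (4 * (Kc + 1)), by positivity, ?_⟩
    intro m A hA hAsub hAvol
    set δ' : ℝ := ε ^ 2 / (4 * (Kc + 1)) with hδ'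
    rw [MeasureTheory.integral_eq_lintegral_of_nonneg_ae
      (ae_of_all _ fun q => abs_nonneg _) ((hmeasL m).abs.aestronglyMeasurable)]
    apply ENNReal.toReal_le_of_le_ofReal hε.le
    have hfinal : T * δ' + Kc / T ≤ ε := by
      have h1 : T * δ' = ε / 2 := by
        rw [hT, hδ']
        field_simp
        ring
      have h2 : Kc / T ≤ ε / 2 := by
        rw [div_le_iff₀ hT0, hT]
        have h3 : ε / 2 * (2 * (Kc + 1) / ε) = Kc + 1 := by
          field_simp
        rw [h3]
        linarith
      linarith
    calc ∫⁻ q in A, ENNReal.ofReal |Real.log ‖ηm m q.1 - ηm m q.2‖|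
        ≤ ∫⁻ q in A, (ENNReal.ofReal T
            + ENNReal.ofReal ((Real.log ‖ηm m q.1 - ηm m q.2‖) ^ 2) / ENNReal.ofReal T) := by
          apply lintegral_mono
          intro q
          set t : ℝ := Real.log ‖ηm m q.1 - ηm m q.2‖
          have h1 : |t| ≤ T + t ^ 2 / T := by
            have h2 : T * |t| ≤ T * T + t ^ 2 := by
              nlinarith [sq_abs t, sq_nonneg (|t| - T)]
            calc |t| = T * |t| / T := by field_simp
              _ ≤ (T * T + t ^ 2) / T := by gcongr
              _ = T + t ^ 2 / T := by field_simp
          calc ENNReal.ofReal |t| ≤ ENNReal.ofReal (T + t ^ 2 / T) :=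
                ENNReal.ofReal_le_ofReal h1
            _ = ENNReal.ofReal T + ENNReal.ofReal (t ^ 2) / ENNReal.ofReal T := by
                rw [ENNReal.ofReal_add hT0.le (by positivity),
                  ENNReal.ofReal_div_of_pos hT0]
      _ = ENNReal.ofReal T * volume A
          + (∫⁻ q in A, ENNReal.ofReal ((Real.log ‖ηm m q.1 - ηm m q.2‖) ^ 2))
            / ENNReal.ofReal T := by
          rw [lintegral_add_left measurable_const, setLIntegral_const]
          congr 1
          simp_rw [div_eq_mul_inv]
          rw [lintegral_mul_const' _ _
            (ENNReal.inv_ne_top.2 (ne_of_gt (ENNReal.ofReal_pos.2 hT0)))]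
      _ ≤ ENNReal.ofReal T * ENNReal.ofReal δ' + ENNReal.ofReal Kc / ENNReal.ofReal T := by
          apply add_le_add
          · exact mul_le_mul_right hAvol _
          · exact ENNReal.div_le_div_right
              ((lintegral_mono_set hAsub).trans (key2 m)) _
      _ = ENNReal.ofReal (T * δ' + Kc / T) := by
          rw [← ENNReal.ofReal_mul hT0.le, ← ENNReal.ofReal_div_of_pos hT0,
            ← ENNReal.ofReal_add (by positivity) (by positivity)]
      _ ≤ ENNReal.ofReal ε := ENNReal.ofReal_le_ofReal hfinal
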